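/- Let G be a connected non-bipartite signed graph and suppose a facet subgraph H of G consists of exactly two components H_1 (bipartite, with bipartition L_1 ∪ R_1) and H_2 (non-bipartite). Let a ∈ ℤ^n lie in ℤρ(E(G)) and satisfy Σ_{i∈L_1} a_i = Σ_{j∈R_1} a_j. Then a ∈ ℤρ(E(H)) = ℤρ(E(H_1)) ⊕ ℤρ(E(H_2)). -/

import Mathlib

open scoped BigOperators

namespace EdgeRing

/-- A signed edge on vertex set `Fin n`: endpoints `e.1`, `e.2.1` and sign `e.2.2`. -/
abbrev SEdge (n : ℕ) := Fin n × Fin n × ℤ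

/-- A signed graph on `n` vertices: a set of signed edges (loops allowed, `e.1 = e.2.1`). -/
structure SGraph (n : ℕ) where
  E : Set (SEdge n)
  sgn_unit : ∀ e ∈ E, e.2.2 = 1 ∨ e.2.2 = -1

variable {n : ℕ}

/-- `ρ(±ij) = ±(e_i + e_j)` (a loop at `i` gives `±2 e_i`), integer version. -/
def rhoZ (e : SEdge n) : Fin n → ℤ :=
  fun v => e.2.2 * ((if e.1 = v then 1 else 0) + (if e.2.1 = v then 1 else 0))

/-- real version of `rhoZ`. -/
def rhoR (e : SEdge n) : Fin n → ℝ := fun v => (rhoZ e v : ℝ)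

def toR (a : Fin n → ℤ) : Fin n → ℝ := fun v => (a v : ℝ)

def SGraph.rhoZSet (G : SGraph n) : Set (Fin n → ℤ) := {x | ∃ e ∈ G.E, x = rhoZ e}

def SGraph.rhoRSet (G : SGraph n) : Set (Fin n → ℝ) := {x | ∃ e ∈ G.E, x = rhoR e}

/-- `ℤρ(E(G))`: the subgroup of `ℤ^n` generated by the edge vectors. -/
def SGraph.lattice (G : SGraph n) : AddSubgroup (Fin n → ℤ) :=
  AddSubgroup.closure G.rhoZSet

/-- `ℤ₊ρ(E(G))`: the affine semigroup generated by the edge vectors. -/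
def SGraph.sgp (G : SGraph n) : AddSubmonoid (Fin n → ℤ) :=
  AddSubmonoid.closure G.rhoZSet

/-- adjacency via an edge of `G` (symmetric by definition). -/
def SGraph.adj (G : SGraph n) (i j : Fin n) : Prop :=
  ∃ e ∈ G.E, (e.1 = i ∧ e.2.1 = j) ∨ (e.1 = j ∧ e.2.1 = i)

/-- `G` is connected: any two vertices are joined by a walk. -/
def SGraph.Connected (G : SGraph n) : Prop :=
  ∀ i j : Fin n, Relation.ReflTransGen G.adj i j

/-- the vertex set of the connected component of `v`. -/
def SGraph.compSet (G : SGraph n) (v : Fin n) : Set (Fin n) :=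
  {w | Relation.ReflTransGen G.adj v w}

/-- `C` is (the vertex set of) a component of `G`. -/
def SGraph.IsComp (G : SGraph n) (C : Set (Fin n)) : Prop :=
  ∃ v, C = G.compSet v

/-- the edge `e` is incident to the vertex set `S`. -/
def incident (e : SEdge n) (S : Set (Fin n)) : Prop := e.1 ∈ S ∨ e.2.1 ∈ S

/-- the vertex set `C` is partitioned as `L ∪ R` and every edge of `G` incident to `C`
has one endpoint in `L` and one in `R`. -/
def SGraph.BipWith (G : SGraph n) (C L R : Set (Fin n)) : Prop :=
  C = L ∪ R ∧ Disjoint L R ∧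
    ∀ e ∈ G.E, incident e C → ((e.1 ∈ L ∧ e.2.1 ∈ R) ∨ (e.1 ∈ R ∧ e.2.1 ∈ L))

/-- the vertex set `C` (e.g. a component) is bipartite in `G`. -/
def SGraph.BipOn (G : SGraph n) (C : Set (Fin n)) : Prop := ∃ L R, G.BipWith C L R

/-- `L ∪ R` is a bipartition of (all of) `G`. -/
def SGraph.IsBipartition (G : SGraph n) (L R : Set (Fin n)) : Prop :=
  G.BipWith Set.univ L R

def SGraph.Bipartite (G : SGraph n) : Prop := ∃ L R, G.IsBipartition L R

/-- `comp G`: the number of connected components of `G`. -/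
noncomputable def SGraph.comp (G : SGraph n) : ℕ := Nat.card {C : Set (Fin n) // G.IsComp C}

/-- `bicomp G`: the number of bipartite connected components of `G`. -/
noncomputable def SGraph.bicomp (G : SGraph n) : ℕ :=
  Nat.card {C : Set (Fin n) // G.IsComp C ∧ G.BipOn C}

/-- the dual vector `e_L^* - e_R^*` as an element of `ℝ^n`. -/
noncomputable def dvec (L R : Set (Fin n)) : Fin n → ℝ :=
  fun v => Set.indicator L (fun _ => (1 : ℝ)) v - Set.indicator R (fun _ => (1 : ℝ)) v

/-- `L, R` witness the facet-subgraph condition for the bipartite component `C` of `H`: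
`C = L ∪ R` is a bipartition, and every edge of `G` not in `H` is a positive edge
incident to `L` but not `R`, or a negative edge incident to `R` but not `L`. -/
def FacetWitness (G H : SGraph n) (C L R : Set (Fin n)) : Prop :=
  H.BipWith C L R ∧
    ∀ e ∈ G.E \ H.E,
      (e.2.2 = 1 ∧ incident e L ∧ ¬ incident e R) ∨
      (e.2.2 = -1 ∧ incident e R ∧ ¬ incident e L)

/-- `H` is a facet subgraph of `G`. -/
def IsFacetSubgraph (G H : SGraph n) : Prop :=
  H.E ⊆ G.E ∧ H.bicomp = G.bicomp + 1 ∧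
    ∀ C, H.IsComp C → H.BipOn C → ¬ G.IsComp C → ∃ L R, FacetWitness G H C L R

/-- the cone generated by `S`: all nonnegative real combinations. -/
def coneOf (S : Set (Fin n → ℝ)) : Set (Fin n → ℝ) :=
  {x | ∃ (t : Finset (Fin n → ℝ)) (c : (Fin n → ℝ) → ℝ),
    ↑t ⊆ S ∧ (∀ y, 0 ≤ c y) ∧ x = ∑ y ∈ t, c y • y}

/-- the dimension of a subset of `ℝ^n`: dimension of its linear span. -/
noncomputable def sdim (S : Set (Fin n → ℝ)) : ℕ := Module.finrank ℝ (Submodule.span ℝ S)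

/-- `F` is a face of the cone `C`, cut out by a supporting linear form. -/
def IsFaceOf (C F : Set (Fin n → ℝ)) : Prop :=
  ∃ σ : (Fin n → ℝ) →ₗ[ℝ] ℝ, (∀ x ∈ C, 0 ≤ σ x) ∧ F = C ∩ {x | σ x = 0}

/-- `F` is a facet of the cone `C`: a proper face of dimension `dim C - 1`. -/
def IsFacetOf (C F : Set (Fin n → ℝ)) : Prop :=
  IsFaceOf C F ∧ F ≠ C ∧ sdim F + 1 = sdim C

/-- the subgraph of `G` consisting of the edges inside the vertex set `C`. -/
def SGraph.restrict (G : SGraph n) (C : Set (Fin n)) : SGraph n :=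
  ⟨{e ∈ G.E | e.1 ∈ C}, fun e he => G.sgn_unit e he.1⟩

/-- Vitulli's criterion for Serre's `R₁` condition for the edge ring `k[G]`
(taken here as the definition of `R₁`). -/
def SerreR1 (G : SGraph n) : Prop :=
  ∀ F, IsFacetOf (coneOf G.rhoRSet) F →
    ∃ σ : (Fin n → ℝ) →ₗ[ℝ] ℝ,
      (∀ x ∈ coneOf G.rhoRSet, 0 ≤ σ x) ∧
      F = coneOf G.rhoRSet ∩ {x | σ x = 0} ∧
      (∀ a ∈ G.lattice, ∃ z : ℤ, σ (toR a) = z) ∧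
      (∃ a ∈ G.sgp, σ (toR a) = 1) ∧
      ((AddSubgroup.closure {a : Fin n → ℤ | a ∈ G.sgp ∧ toR a ∈ F} : AddSubgroup (Fin n → ℤ)) :
          Set (Fin n → ℤ)) = {a : Fin n → ℤ | a ∈ G.lattice ∧ σ (toR a) = 0}

/-! ### Mixed signed, directed graphs -/

/-- A mixed signed, directed graph: signed edges `SE` (loops allowed) and
directed edges `DE` (no directed loops). -/
structure MGraph (n : ℕ) where
  SE : Set (SEdge n)
  DE : Set (Fin n × Fin n)
  sgn_unit : ∀ e ∈ SE, e.2.2 = 1 ∨ e.2.2 = -1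
  no_dloop : ∀ e ∈ DE, e.1 ≠ e.2

/-- `ρ((i,j)) = e_j - e_i` for a directed edge. -/
def rhoD (e : Fin n × Fin n) : Fin n → ℤ :=
  fun v => (if e.2 = v then 1 else 0) - (if e.1 = v then 1 else 0)

def MGraph.rhoZSet (G : MGraph n) : Set (Fin n → ℤ) :=
  {x | ∃ e ∈ G.SE, x = rhoZ e} ∪ {x | ∃ e ∈ G.DE, x = rhoD e}

def MGraph.rhoRSet (G : MGraph n) : Set (Fin n → ℝ) :=
  {x | ∃ a ∈ G.rhoZSet, x = toR a}

/-- `ℤρ(E(G))` for a mixed signed, directed graph. -/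
def MGraph.lattice (G : MGraph n) : AddSubgroup (Fin n → ℤ) :=
  AddSubgroup.closure G.rhoZSet

def MGraph.adj (G : MGraph n) (i j : Fin n) : Prop :=
  (∃ e ∈ G.SE, (e.1 = i ∧ e.2.1 = j) ∨ (e.1 = j ∧ e.2.1 = i)) ∨
  (∃ e ∈ G.DE, (e.1 = i ∧ e.2 = j) ∨ (e.1 = j ∧ e.2 = i))

def MGraph.Connected (G : MGraph n) : Prop :=
  ∀ i j : Fin n, Relation.ReflTransGen G.adj i j

def MGraph.compSet (G : MGraph n) (v : Fin n) : Set (Fin n) :=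
  {w | Relation.ReflTransGen G.adj v w}

def MGraph.IsComp (G : MGraph n) (C : Set (Fin n)) : Prop :=
  ∃ v, C = G.compSet v

noncomputable def MGraph.comp (G : MGraph n) : ℕ := Nat.card {C : Set (Fin n) // G.IsComp C}

/-- the directed edge `e` is incident to the vertex set `S`. -/
def dincident (e : Fin n × Fin n) (S : Set (Fin n)) : Prop := e.1 ∈ S ∨ e.2 ∈ S

/-- Bipartiteness of the augmented signed graph of `G` on the vertex set `C`,
expressed on `G` itself: `C = L ∪ R`, every signed edge incident to `C` crosses
between `L` and `R`, and every directed edge incident to `C` has both endpoints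
in the same part (its artificial vertex lies on the other side). -/
def MGraph.BipWith (G : MGraph n) (C L R : Set (Fin n)) : Prop :=
  C = L ∪ R ∧ Disjoint L R ∧
    (∀ e ∈ G.SE, incident e C → ((e.1 ∈ L ∧ e.2.1 ∈ R) ∨ (e.1 ∈ R ∧ e.2.1 ∈ L))) ∧
    (∀ e ∈ G.DE, dincident e C → ((e.1 ∈ L ∧ e.2 ∈ L) ∨ (e.1 ∈ R ∧ e.2 ∈ R)))

def MGraph.BipOn (G : MGraph n) (C : Set (Fin n)) : Prop := ∃ L R, G.BipWith C L R

def MGraph.IsBipartition (G : MGraph n) (L R : Set (Fin n)) : Prop :=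
  G.BipWith Set.univ L R

def MGraph.Bipartite (G : MGraph n) : Prop := ∃ L R, G.IsBipartition L R

/-- number of components of `G` whose augmentation is bipartite. -/
noncomputable def MGraph.bicomp (G : MGraph n) : ℕ :=
  Nat.card {C : Set (Fin n) // G.IsComp C ∧ G.BipOn C}

/-- facet-subgraph witness for mixed signed, directed graphs. -/
def MFacetWitness (G H : MGraph n) (C L R : Set (Fin n)) : Prop :=
  H.BipWith C L R ∧
    (∀ e ∈ G.SE \ H.SE,
      (e.2.2 = 1 ∧ incident e L ∧ ¬ incident e R) ∨
      (e.2.2 = -1 ∧ incident e R ∧ ¬ incident e L)) ∧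
    (∀ e ∈ G.DE \ H.DE, (e.2 ∈ L ∧ e.1 ∉ L) ∨ (e.1 ∈ R ∧ e.2 ∉ R))

/-- `H` is a facet subgraph of the mixed signed, directed graph `G`. -/
def IsMFacetSubgraph (G H : MGraph n) : Prop :=
  H.SE ⊆ G.SE ∧ H.DE ⊆ G.DE ∧ H.bicomp = G.bicomp + 1 ∧
    ∀ C, H.IsComp C → H.BipOn C → ¬ G.IsComp C → ∃ L R, MFacetWitness G H C L R

/-! ### Auxiliary material for Statement 14 -/

open scoped Classical

/-- standard basis vector. -/
private def sv (i : Fin n) : Fin n → ℤ := fun v => if i = v then 1 else 0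

private lemma sum_sv (a : Fin n → ℤ) : ∑ w, a w • sv w = a := by
  funext v
  simp [sv, Finset.sum_apply, mul_ite]

private lemma edge_mem (H : SGraph n) {e : SEdge n} (he : e ∈ H.E) :
    sv e.1 + sv e.2.1 ∈ H.lattice := by
  have hmem : rhoZ e ∈ H.lattice := AddSubgroup.subset_closure ⟨e, he, rfl⟩
  rcases H.sgn_unit e he with h | h
  · have hrw : rhoZ e = sv e.1 + sv e.2.1 := by
      funext v; simp [rhoZ, sv, h]
    rwa [hrw] at hmem
  · have hrw : rhoZ e = -(sv e.1 + sv e.2.1) := by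
      funext v; simp [rhoZ, sv, h]; try ring
    rw [hrw] at hmem
    simpa using H.lattice.neg_mem hmem

private lemma adj_mem (H : SGraph n) {i j : Fin n} (h : H.adj i j) :
    sv i + sv j ∈ H.lattice := by
  obtain ⟨e, he, h | h⟩ := h
  · obtain ⟨h1, h2⟩ := h; subst h1; subst h2; exact edge_mem H he
  · obtain ⟨h1, h2⟩ := h; subst h1; subst h2
    rw [add_comm]; exact edge_mem H he

private lemma adj_symm (H : SGraph n) {i j : Fin n} (h : H.adj i j) : H.adj j i := by
  obtain ⟨e, he, h⟩ := h
  exact ⟨e, he, h.symm⟩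

private lemma walk_mem (H : SGraph n) {i j : Fin n} (h : Relation.ReflTransGen H.adj i j) :
    sv i - sv j ∈ H.lattice ∨ sv i + sv j ∈ H.lattice := by
  induction h with
  | refl => left; simpa using H.lattice.zero_mem
  | @tail b c hab hbc ih =>
      have hedge : sv b + sv c ∈ H.lattice := adj_mem H hbc
      rcases ih with hd | hs
      · right
        have hm := H.lattice.add_mem hd hedge
        have heq : (sv i - sv b) + (sv b + sv c) = sv i + sv c := by ring
        rwa [heq] at hm
      · left
        have hm := H.lattice.sub_mem hs hedge
        have heq : (sv i + sv b) - (sv b + sv c) = sv i - sv c := by ring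
        rwa [heq] at hm

/-- walks inside a component. -/
private lemma walk_of_mem_comp (H : SGraph n) {v w u : Fin n}
    (hw : w ∈ H.compSet v) (hu : u ∈ H.compSet v) :
    Relation.ReflTransGen H.adj w u := by
  have hsymm : Symmetric (Relation.ReflTransGen H.adj) :=
    by haveI : Std.Symm H.adj := ⟨fun _ _ h => adj_symm H h⟩; exact fun x y h => Std.Symm.symm (r := Relation.ReflTransGen H.adj) x y h
  exact Relation.ReflTransGen.trans (hsymm hw) hu

/-- the dual functional `Σ_L x - Σ_R x`, unbundled. -/
private noncomputable def eps (L R : Set (Fin n)) (i : Fin n) : ℤ :=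
  (if i ∈ L then 1 else 0) - (if i ∈ R then 1 else 0)

private noncomputable def sig (L R : Set (Fin n)) (x : Fin n → ℤ) : ℤ := ∑ j, eps L R j * x j

private lemma sig_add (L R : Set (Fin n)) (x y : Fin n → ℤ) :
    sig L R (x + y) = sig L R x + sig L R y := by
  simp [sig, mul_add, Finset.sum_add_distrib]

private lemma sig_neg (L R : Set (Fin n)) (x : Fin n → ℤ) :
    sig L R (-x) = -sig L R x := by
  simp [sig, Finset.sum_neg_distrib]

private lemma sig_sub (L R : Set (Fin n)) (x y : Fin n → ℤ) :
    sig L R (x - y) = sig L R x - sig L R y := by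
  rw [sub_eq_add_neg, sig_add, sig_neg]; ring

private lemma sig_sv (L R : Set (Fin n)) (i : Fin n) : sig L R (sv i) = eps L R i := by
  simp [sig, sv, mul_ite]

/-- `sig` vanishes on the lattice provided it vanishes on each edge. -/
private lemma sig_lattice (H : SGraph n) (L R : Set (Fin n))
    (hgen : ∀ e ∈ H.E, eps L R e.1 + eps L R e.2.1 = 0) :
    ∀ x ∈ H.lattice, sig L R x = 0 := by
  intro x hx
  refine AddSubgroup.closure_induction (p := fun x _ => sig L R x = 0) ?_ ?_ ?_ ?_ hx
  · rintro y ⟨e, he, rfl⟩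
    have h1 : rhoZ e = e.2.2 • (sv e.1 + sv e.2.1) := by
      funext v; simp [rhoZ, sv]; try ring
    have h2 : sig L R (e.2.2 • (sv e.1 + sv e.2.1)) =
        e.2.2 * (eps L R e.1 + eps L R e.2.1) := by
      simp [sig, sv, Finset.mul_sum, mul_ite, mul_add, Finset.sum_add_distrib]
      try ring
    rw [h1, h2, hgen e he, mul_zero]
  · simp [sig]
  · intro y z _ _ hy hz; rw [sig_add, hy, hz, add_zero]
  · intro y _ hy; rw [sig_neg, hy, neg_zero]

/-- total coordinate sum of any lattice element is even. -/
private lemma lattice_sum_even (G : SGraph n) {a : Fin n → ℤ} (ha : a ∈ G.lattice) :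
    (2 : ℤ) ∣ ∑ j, a j := by
  have key : ∀ x ∈ G.lattice, (2 : ℤ) ∣ ∑ j, x j := by
    intro x hx
    refine AddSubgroup.closure_induction (p := fun x _ => (2 : ℤ) ∣ ∑ j, x j) ?_ ?_ ?_ ?_ hx
    · rintro y ⟨e, he, rfl⟩
      have : ∑ j, rhoZ e j = e.2.2 * 2 := by
        simp [rhoZ, Finset.mul_sum, mul_add, Finset.sum_add_distrib]
        ring
      rw [this]
      exact ⟨e.2.2, mul_comm _ _⟩
    · simp
    · intro y z _ _ hy hz
      simpa [Finset.sum_add_distrib] using dvd_add hy hz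
    · intro y _ hy
      simpa [Finset.sum_neg_distrib] using hy.neg_right
  exact key a ha

/-- for a non-bipartite component, all sums and differences of basis vectors lie
in the lattice. -/
private lemma nonbip_mem (H : SGraph n) (v : Fin n) (hnb : ¬ H.BipOn (H.compSet v)) :
    ∀ w ∈ H.compSet v, sv v - sv w ∈ H.lattice ∧ sv v + sv w ∈ H.lattice := by
  by_cases hx : ∃ u ∈ H.compSet v, sv v - sv u ∈ H.lattice ∧ sv v + sv u ∈ H.lattice
  · obtain ⟨u, _, hd, hs⟩ := hx
    have h2v : sv v + sv v ∈ H.lattice := by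
      have hm := H.lattice.add_mem hd hs
      have heq : (sv v - sv u) + (sv v + sv u) = sv v + sv v := by ring
      rwa [heq] at hm
    intro w hw
    rcases walk_mem H hw with h | h
    · refine ⟨h, ?_⟩
      have hm := H.lattice.sub_mem h2v h
      have heq : (sv v + sv v) - (sv v - sv w) = sv v + sv w := by ring
      rwa [heq] at hm
    · refine ⟨?_, h⟩
      have hm := H.lattice.sub_mem h2v h
      have heq : (sv v + sv v) - (sv v + sv w) = sv v - sv w := by ring
      rwa [heq] at hm
  · exfalso
    apply hnb
    push_neg at hx
    refine ⟨{w | w ∈ H.compSet v ∧ sv v - sv w ∈ H.lattice},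
      {w | w ∈ H.compSet v ∧ sv v + sv w ∈ H.lattice}, ?_, ?_, ?_⟩
    · ext w
      constructor
      · intro hw
        rcases walk_mem H hw with h | h
        · exact Or.inl ⟨hw, h⟩
        · exact Or.inr ⟨hw, h⟩
      · rintro (⟨hw, _⟩ | ⟨hw, _⟩) <;> exact hw
    · rw [Set.disjoint_left]
      rintro w ⟨hw, hd⟩ ⟨_, hs⟩
      exact hx w hw hd hs
    · intro e he hinc
      have hadj : H.adj e.1 e.2.1 := ⟨e, he, Or.inl ⟨rfl, rfl⟩⟩
      have h1 : e.1 ∈ H.compSet v := by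
        rcases hinc with h | h
        · exact h
        · exact Relation.ReflTransGen.tail h (adj_symm H hadj)
      have h2 : e.2.1 ∈ H.compSet v := Relation.ReflTransGen.tail h1 hadj
      have hedge := edge_mem H he
      rcases walk_mem H h1 with h | h
      · left
        refine ⟨⟨h1, h⟩, ⟨h2, ?_⟩⟩
        have hm := H.lattice.add_mem h hedge
        have heq : (sv v - sv e.1) + (sv e.1 + sv e.2.1) = sv v + sv e.2.1 := by ring
        rwa [heq] at hm
      · right
        refine ⟨⟨h1, h⟩, ⟨h2, ?_⟩⟩
        have hm := H.lattice.sub_mem h hedge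
        have heq : (sv v + sv e.1) - (sv e.1 + sv e.2.1) = sv v - sv e.2.1 := by ring
        rwa [heq] at hm

/-- for a connected non-bipartite `G` and a facet subgraph `H` with
exactly two components, `C₁` bipartite (with witnessing bipartition `L₁ ∪ R₁`) and
`C₂` non-bipartite, any `a ∈ ℤρ(E(G))` balancing `L₁` against `R₁` lies in
`ℤρ(E(H)) = ℤρ(E(H₁)) ⊕ ℤρ(E(H₂))`. -/
theorem stmt14 {n : ℕ} (G H : SGraph n) (hconn : G.Connected) (hnb : ¬ G.Bipartite)
    (hfs : IsFacetSubgraph G H)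
    (C1 C2 L1 R1 : Set (Fin n)) (h1 : H.IsComp C1) (h2 : H.IsComp C2) (hne : C1 ≠ C2)
    (honly : ∀ C, H.IsComp C → C = C1 ∨ C = C2)
    (hw : FacetWitness G H C1 L1 R1) (hb2 : ¬ H.BipOn C2)
    (a : Fin n → ℤ) (ha : a ∈ G.lattice)
    (hsum : ∑ i, L1.indicator a i = ∑ i, R1.indicator a i) :
    a ∈ H.lattice ∧
      H.lattice = (H.restrict C1).lattice ⊔ (H.restrict C2).lattice := by
  classical
  obtain ⟨v1, hC1⟩ := h1
  obtain ⟨v2, hC2⟩ := h2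
  have hsymmR : Symmetric (Relation.ReflTransGen H.adj) :=
    by haveI : Std.Symm H.adj := ⟨fun _ _ h => adj_symm H h⟩; exact fun x y h => Std.Symm.symm (r := Relation.ReflTransGen H.adj) x y h
  have hdisj : ∀ w, w ∈ C1 → w ∈ C2 → False := by
    intro w hw1 hw2
    apply hne
    subst hC1; subst hC2
    ext u
    constructor
    · intro hu
      exact Relation.ReflTransGen.trans hw2 (Relation.ReflTransGen.trans (hsymmR hw1) hu)
    · intro hu
      exact Relation.ReflTransGen.trans hw1 (Relation.ReflTransGen.trans (hsymmR hw2) hu)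
  have hcover : ∀ w, w ∈ C1 ∨ w ∈ C2 := by
    intro w
    have hmemw : w ∈ H.compSet w := Relation.ReflTransGen.refl
    rcases honly (H.compSet w) ⟨w, rfl⟩ with h | h
    · left; rw [← h]; exact hmemw
    · right; rw [← h]; exact hmemw
  constructor
  · -- Part 1 : `a ∈ H.lattice`
    obtain ⟨⟨hC1eq, hdisjLR, hedge⟩, -⟩ := hw
    have hL1sub : ∀ i, i ∈ L1 → i ∈ C1 := by
      intro i hi; rw [hC1eq]; exact Or.inl hi
    have hR1sub : ∀ i, i ∈ R1 → i ∈ C1 := by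
      intro i hi; rw [hC1eq]; exact Or.inr hi
    have hepsL : ∀ i ∈ L1, eps L1 R1 i = 1 := by
      intro i hi
      have hR : i ∉ R1 := Set.disjoint_left.mp hdisjLR hi
      simp [eps, hi, hR]
    have hepsR : ∀ i ∈ R1, eps L1 R1 i = -1 := by
      intro i hi
      have hL : i ∉ L1 := Set.disjoint_right.mp hdisjLR hi
      simp [eps, hi, hL]
    have hepsO : ∀ i, i ∉ C1 → eps L1 R1 i = 0 := by
      intro i hi
      have hL : i ∉ L1 := fun h => hi (hL1sub i h)
      have hR : i ∉ R1 := fun h => hi (hR1sub i h)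
      simp [eps, hL, hR]
    have hsig0 : ∀ x ∈ H.lattice, sig L1 R1 x = 0 := by
      apply sig_lattice
      intro e he
      by_cases hinc : incident e C1
      · rcases hedge e he hinc with ⟨hl, hr⟩ | ⟨hr, hl⟩
        · rw [hepsL _ hl, hepsR _ hr]; ring
        · rw [hepsR _ hr, hepsL _ hl]; ring
      · simp only [incident, not_or] at hinc
        rw [hepsO _ hinc.1, hepsO _ hinc.2]; ring
    set aC1 : Fin n → ℤ := fun w => if w ∈ C1 then a w else 0 with haC1
    set aC2 : Fin n → ℤ := fun w => if w ∈ C2 then a w else 0 with haC2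
    have ha12 : a = aC1 + aC2 := by
      funext w
      by_cases hw1 : w ∈ C1 <;> by_cases hw2 : w ∈ C2
      · exact absurd hw2 (fun h => hdisj w hw1 h)
      · simp [haC1, haC2, hw1, hw2]
      · simp [haC1, haC2, hw1, hw2]
      · rcases hcover w with h | h
        · exact absurd h hw1
        · exact absurd h hw2
    -- even total sum and even sum on `C2`
    have htot : (2 : ℤ) ∣ ∑ j, a j := lattice_sum_even G ha
    have hsplitC1 : ∑ j, aC1 j = (∑ i, L1.indicator a i) + (∑ i, R1.indicator a i) := by
      rw [← Finset.sum_add_distrib]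
      apply Finset.sum_congr rfl
      intro j _
      by_cases hL : j ∈ L1
      · have hR : j ∉ R1 := Set.disjoint_left.mp hdisjLR hL
        have hc : j ∈ C1 := hL1sub j hL
        simp [haC1, hc, Set.indicator_apply, hL, hR]
      · by_cases hR : j ∈ R1
        · have hc : j ∈ C1 := hR1sub j hR
          simp [haC1, hc, Set.indicator_apply, hL, hR]
        · have hc : j ∉ C1 := by
            rw [hC1eq]; rintro (h | h)
            · exact hL h
            · exact hR h
          simp [haC1, hc, Set.indicator_apply, hL, hR]
    have hevenC1 : (2 : ℤ) ∣ ∑ j, aC1 j := by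
      rw [hsplitC1, ← hsum]
      exact ⟨_, (two_mul _).symm⟩
    have hevenC2 : (2 : ℤ) ∣ ∑ j, aC2 j := by
      have hsum12 : ∑ j, a j = (∑ j, aC1 j) + (∑ j, aC2 j) := by
        rw [← Finset.sum_add_distrib]
        apply Finset.sum_congr rfl
        intro j _
        rw [ha12]; rfl
      rw [hsum12] at htot
      exact (dvd_add_right hevenC1).mp htot
    -- `aC2` lies in the lattice
    have hnb2 : ¬ H.BipOn (H.compSet v2) := by rw [← hC2]; exact hb2
    have hE2 := nonbip_mem H v2 hnb2
    have h2v2 : sv v2 + sv v2 ∈ H.lattice := (hE2 v2 Relation.ReflTransGen.refl).2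
    obtain ⟨m, hm⟩ := hevenC2
    have hmemC2 : aC2 ∈ H.lattice := by
      have hkey : aC2 = (∑ w, aC2 w • (sv w - sv v2)) + (∑ w, aC2 w) • sv v2 := by
        have h1 : ∑ w, aC2 w • (sv w - sv v2)
            = (∑ w, aC2 w • sv w) - (∑ w, aC2 w) • sv v2 := by
          rw [Finset.sum_smul, ← Finset.sum_sub_distrib]
          apply Finset.sum_congr rfl
          intro w _
          rw [smul_sub]
        rw [h1, sum_sv]
        ring
      rw [hkey]
      apply H.lattice.add_mem
      · apply sum_mem
        intro w _
        by_cases hwC : w ∈ C2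
        · have hwC' : w ∈ H.compSet v2 := by rw [← hC2]; exact hwC
          have hd := (hE2 w hwC').1
          have heq : sv w - sv v2 = -(sv v2 - sv w) := by ring
          rw [heq]
          exact H.lattice.zsmul_mem (H.lattice.neg_mem hd) _
        · have h0 : aC2 w = 0 := by simp [haC2, hwC]
          rw [h0, zero_smul]
          exact H.lattice.zero_mem
      · rw [hm, mul_comm, mul_smul, two_smul]
        exact H.lattice.zsmul_mem h2v2 m
    -- `aC1` lies in the lattice
    have hv1C1 : v1 ∈ C1 := by rw [hC1]; exact Relation.ReflTransGen.refl
    have hepsv : eps L1 R1 v1 = 1 ∨ eps L1 R1 v1 = -1 := by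
      rcases (hC1eq ▸ hv1C1 : v1 ∈ L1 ∪ R1) with h | h
      · left; exact hepsL v1 h
      · right; exact hepsR v1 h
    have hpar : ∀ w ∈ C1, sv w - (eps L1 R1 w * eps L1 R1 v1) • sv v1 ∈ H.lattice := by
      intro w hwC
      have hwalk : Relation.ReflTransGen H.adj v1 w := by rw [hC1] at hwC; exact hwC
      rcases walk_mem H hwalk with h | h
      · have h0 := hsig0 _ h
        rw [sig_sub, sig_sv, sig_sv] at h0
        have hw' : eps L1 R1 w = eps L1 R1 v1 := by omega
        have hprod : eps L1 R1 w * eps L1 R1 v1 = 1 := by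
          rw [hw']
          rcases hepsv with h' | h' <;> rw [h'] <;> norm_num
        rw [hprod, one_smul]
        have heq : sv w - sv v1 = -(sv v1 - sv w) := by ring
        rw [heq]
        exact H.lattice.neg_mem h
      · have h0 := hsig0 _ h
        rw [sig_add, sig_sv, sig_sv] at h0
        have hw' : eps L1 R1 w = -eps L1 R1 v1 := by omega
        have hprod : eps L1 R1 w * eps L1 R1 v1 = -1 := by
          rw [hw']
          rcases hepsv with h' | h' <;> rw [h'] <;> norm_num
        rw [hprod]
        have heq : sv w - (-1 : ℤ) • sv v1 = sv v1 + sv w := by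
          rw [neg_smul, one_smul]; ring
        rw [heq]
        exact h
    have hsigaC1 : sig L1 R1 aC1 = 0 := by
      have hcalc : sig L1 R1 aC1 = (∑ i, L1.indicator a i) - (∑ i, R1.indicator a i) := by
        rw [sig, ← Finset.sum_sub_distrib]
        apply Finset.sum_congr rfl
        intro j _
        by_cases hL : j ∈ L1
        · have hR : j ∉ R1 := Set.disjoint_left.mp hdisjLR hL
          have hc : j ∈ C1 := hL1sub j hL
          simp [haC1, eps, hc, Set.indicator_apply, hL, hR]
        · by_cases hR : j ∈ R1
          · have hc : j ∈ C1 := hR1sub j hR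
            simp [haC1, eps, hc, Set.indicator_apply, hL, hR]
          · have hc : j ∉ C1 := by
              rw [hC1eq]; rintro (h | h)
              · exact hL h
              · exact hR h
            simp [haC1, eps, hc, Set.indicator_apply, hL, hR]
      rw [hcalc, hsum, sub_self]
    have hmemC1 : aC1 ∈ H.lattice := by
      have hkey : aC1 = (∑ w, aC1 w • (sv w - (eps L1 R1 w * eps L1 R1 v1) • sv v1))
          + (sig L1 R1 aC1 * eps L1 R1 v1) • sv v1 := by
        have h1 : ∑ w, aC1 w • (sv w - (eps L1 R1 w * eps L1 R1 v1) • sv v1)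
            = (∑ w, aC1 w • sv w)
              - (∑ w, aC1 w * (eps L1 R1 w * eps L1 R1 v1)) • sv v1 := by
          rw [Finset.sum_smul, ← Finset.sum_sub_distrib]
          apply Finset.sum_congr rfl
          intro w _
          rw [smul_sub, smul_smul]
        rw [h1, sum_sv]
        have h2 : (∑ w, aC1 w * (eps L1 R1 w * eps L1 R1 v1))
            = sig L1 R1 aC1 * eps L1 R1 v1 := by
          rw [sig, Finset.sum_mul]
          apply Finset.sum_congr rfl
          intro w _
          ring
        rw [h2]
        ring
      rw [hkey, hsigaC1, zero_mul, zero_smul, add_zero]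
      apply sum_mem
      intro w _
      by_cases hwC : w ∈ C1
      · exact H.lattice.zsmul_mem (hpar w hwC) _
      · have h0 : aC1 w = 0 := by simp [haC1, hwC]
        rw [h0, zero_smul]
        exact H.lattice.zero_mem
    rw [ha12]
    exact H.lattice.add_mem hmemC1 hmemC2
  · -- Part 2 : the lattice splits
    have hsets : H.rhoZSet = (H.restrict C1).rhoZSet ∪ (H.restrict C2).rhoZSet := by
      ext x
      constructor
      · rintro ⟨e, he, rfl⟩
        rcases hcover e.1 with h | h
        · exact Or.inl ⟨e, ⟨he, h⟩, rfl⟩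
        · exact Or.inr ⟨e, ⟨he, h⟩, rfl⟩
      · rintro (⟨e, ⟨he, _⟩, rfl⟩ | ⟨e, ⟨he, _⟩, rfl⟩) <;> exact ⟨e, he, rfl⟩
    show H.lattice = _
    rw [SGraph.lattice, hsets, AddSubgroup.closure_union]
    rfl

end EdgeRing
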